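/- Let S be a block matrix [[S11, S12],[S21, S22]] with ker S11 ⊆ ker S21 and S' = S22 - S21 S11⁺ S12. The sequence 0 → ker S11 → ker S → ker S' is exact, where the first map sends c1 to (c1, 0) and the second sends (c1, c2) to c2: the first map is injective with image exactly the set of elements of ker S mapped to 0 by the second. -/
import Mathlib


open Matrix

/-- With `ker S11 ⊆ ker S21` and `S' = S22 - S21 S11⁺ S12`,
the sequence `0 → ker S11 → ker S → ker S'` is exact: `c1 ↦ (c1, 0)` maps
`ker S11` into `ker S` injectively, `(c1,c2) ↦ c2` maps `ker S` into
`ker S'`, and the image of the first map is exactly the kernel of the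
second restricted to `ker S`. -/
theorem stmt19 {m1 m2 n1 n2 : ℕ}
    (S11 : Matrix (Fin m1) (Fin n1) ℝ) (S12 : Matrix (Fin m1) (Fin n2) ℝ)
    (S21 : Matrix (Fin m2) (Fin n1) ℝ) (S22 : Matrix (Fin m2) (Fin n2) ℝ)
    (S11p : Matrix (Fin n1) (Fin m1) ℝ)
    (hp1 : S11 * S11p * S11 = S11)
    (hp2 : S11p * S11 * S11p = S11p)
    (hp3 : (S11 * S11p)ᵀ = S11 * S11p)
    (hp4 : (S11p * S11)ᵀ = S11p * S11)
    (hker : ∀ c1 : Fin n1 → ℝ, S11 *ᵥ c1 = 0 → S21 *ᵥ c1 = 0) :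
    (∀ c1 : Fin n1 → ℝ, S11 *ᵥ c1 = 0 →
      (Matrix.fromBlocks S11 S12 S21 S22) *ᵥ (Sum.elim c1 0) = 0) ∧
    (Function.Injective fun c1 : Fin n1 → ℝ =>
      (Sum.elim c1 0 : (Fin n1 ⊕ Fin n2) → ℝ)) ∧
    (∀ c : (Fin n1 ⊕ Fin n2) → ℝ, (Matrix.fromBlocks S11 S12 S21 S22) *ᵥ c = 0 →
      (S22 - S21 * S11p * S12) *ᵥ (c ∘ Sum.inr) = 0) ∧
    (∀ c : (Fin n1 ⊕ Fin n2) → ℝ, (Matrix.fromBlocks S11 S12 S21 S22) *ᵥ c = 0 →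
      ((c ∘ Sum.inr = 0) ↔
        ∃ c1 : Fin n1 → ℝ, S11 *ᵥ c1 = 0 ∧ c = Sum.elim c1 0)) := by
  have key : ∀ c : (Fin n1 ⊕ Fin n2) → ℝ,
      (Matrix.fromBlocks S11 S12 S21 S22) *ᵥ c = 0 →
      S11 *ᵥ (c ∘ Sum.inl) + S12 *ᵥ (c ∘ Sum.inr) = 0 ∧
      S21 *ᵥ (c ∘ Sum.inl) + S22 *ᵥ (c ∘ Sum.inr) = 0 := by
    intro c hc
    rw [← Sum.elim_comp_inl_inr c, Matrix.fromBlocks_mulVec] at hc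
    constructor
    · funext i; exact congrFun hc (Sum.inl i)
    · funext i; exact congrFun hc (Sum.inr i)
  refine ⟨?_, ?_, ?_, ?_⟩
  · intro c1 h1
    rw [Matrix.fromBlocks_mulVec]
    simp [h1, hker c1 h1]
  · intro a b hab
    funext i
    exact congrFun hab (Sum.inl i)
  · intro c hc
    obtain ⟨h1, h2⟩ := key c hc
    have h1' : S12 *ᵥ (c ∘ Sum.inr) = -(S11 *ᵥ (c ∘ Sum.inl)) := by
      linear_combination (norm := module) h1
    have h2' : S22 *ᵥ (c ∘ Sum.inr) = -(S21 *ᵥ (c ∘ Sum.inl)) := by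
      linear_combination (norm := module) h2
    have hz : S11 *ᵥ (S11p *ᵥ (S11 *ᵥ (c ∘ Sum.inl)) - (c ∘ Sum.inl)) = 0 := by
      rw [Matrix.mulVec_sub]
      simp only [Matrix.mulVec_mulVec]
      rw [← Matrix.mul_assoc, hp1, sub_self]
    have hz2 := hker _ hz
    rw [Matrix.mulVec_sub] at hz2
    have hz3 : S21 *ᵥ S11p *ᵥ S11 *ᵥ (c ∘ Sum.inl) = S21 *ᵥ (c ∘ Sum.inl) := by
      rw [sub_eq_zero] at hz2
      simpa [Matrix.mulVec_mulVec] using hz2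
    rw [Matrix.sub_mulVec]
    rw [show (S21 * S11p * S12) *ᵥ (c ∘ Sum.inr)
        = S21 *ᵥ S11p *ᵥ (S12 *ᵥ (c ∘ Sum.inr)) by
      simp only [Matrix.mulVec_mulVec]
      rw [Matrix.mul_assoc]]
    rw [h1', h2', Matrix.mulVec_neg, Matrix.mulVec_neg, hz3]
    simp
  · intro c hc
    constructor
    · intro h0
      obtain ⟨h1, h2⟩ := key c hc
      rw [h0] at h1
      simp at h1
      refine ⟨c ∘ Sum.inl, h1, ?_⟩
      funext i
      cases i with
      | inl j => simp
      | inr j => simpa using congrFun h0 j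
    · rintro ⟨c1, hc1, rfl⟩
      funext i; simp
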